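/- For every integer n ≥ 0, the n-th Carlitz–Hayes polynomial satisfies E_n(z) = Σ_{m=0}^{n} (−1)^m S_{<n}(q−1, q(q−1), …, (q−1)q^{m−1}) · z^{q^m} in K[z], where the summand for m = 0 is z and, for 1 ≤ m ≤ n, the coefficient of z^{q^m} is (−1)^m S_{<n}(q−1, q(q−1), …, (q−1)q^{m−1}); in particular E_n is F_q-linear and all its other coefficients vanish. (Genus-zero instance of the Proposition on the coefficients κ_{n,m} of the Carlitz–Hayes polynomials.) -/

import Mathlib

/-!
Genus-zero setting: `Fq` the finite field with `q = Fintype.card Fq` elements,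
`A = Fq[θ] = Polynomial Fq`, `K = Fq(θ) = RatFunc Fq`.  For `d ≥ 0` and `n ≥ 1`,
`S_d(n) = Σ_{a ∈ A_{+,d}} a^{-n} ∈ K`; for a tuple `(s₁,…,s_r)`,
`S_{<d}(s₁,…,s_r) = Σ_{i<d} S_i(s₁)·S_{<i}(s₂,…,s_r)`, with `S_{<d}(∅) = 1`.
`zagTuple Fq m` is the tuple `(q-1, q(q-1), …, (q-1)q^{m-1})` (empty for `m = 0`).
-/

open Polynomial
open scoped Classical

/-- The monic polynomial `θ^d + Σ_i c i • θ^i` of degree `d`; as `c` ranges over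
all tuples this enumerates the set `A_{+,d}` of monic polynomials of degree `d`. -/
noncomputable def monicOf (Fq : Type) [Field Fq] (d : ℕ) (c : Fin d → Fq) : Polynomial Fq :=
  Polynomial.X ^ d + ∑ i : Fin d, Polynomial.C (c i) * Polynomial.X ^ (i : ℕ)

/-- The power sum `S_d(n) = Σ_{a ∈ A_{+,d}} a^{-n} ∈ K`. -/
noncomputable def powerSum (Fq : Type) [Field Fq] [Fintype Fq] (d n : ℕ) : RatFunc Fq :=
  ∑ c : Fin d → Fq, (algebraMap (Polynomial Fq) (RatFunc Fq) (monicOf Fq d c))⁻¹ ^ n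

/-- `Slt Fq (s₁,…,s_r) d = S_{<d}(s₁,…,s_r)`, with `S_{<d}(∅) = 1`. -/
noncomputable def Slt (Fq : Type) [Field Fq] [Fintype Fq] : List ℕ → ℕ → RatFunc Fq
  | [], _ => 1
  | n :: rest, d => ∑ i ∈ Finset.range d, powerSum Fq i n * Slt Fq rest i

/-- The tuple `(q-1, q(q-1), …, (q-1)q^{m-1})` of length `m`. -/
def zagTuple (Fq : Type) [Field Fq] [Fintype Fq] (m : ℕ) : List ℕ :=
  (List.range m).map fun i => (Fintype.card Fq - 1) * Fintype.card Fq ^ i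

/-- The `n`-th Carlitz–Hayes polynomial
`E_n(z) = z · Π_{a ∈ A, a ≠ 0, deg a < n} (1 - z/a) ∈ K[z]`,
with the nonzero `a` of degree `< n` enumerated by nonzero `c : Fin n → Fq`
(`E_0(z) = z`). -/
noncomputable def carlitzHayes (Fq : Type) [Field Fq] [Fintype Fq] (n : ℕ) :
    Polynomial (RatFunc Fq) :=
  Polynomial.X * ∏ c : Fin n → Fq,
    if c = 0 then 1
    else 1 - Polynomial.C ((algebraMap (Polynomial Fq) (RatFunc Fq)
        (∑ i : Fin n, Polynomial.C (c i) * Polynomial.X ^ (i : ℕ)))⁻¹) * Polynomial.X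


set_option linter.unusedSectionVars false

namespace S7

variable (Fq : Type) [Field Fq] [Fintype Fq]

lemma hq1 : 1 < Fintype.card Fq := Fintype.one_lt_card

lemma hq1' : (Fintype.card Fq - 1) + 1 = Fintype.card Fq :=
  by have h := hq1 Fq; omega

/-- `∏_{a ∈ Fq} (X - C a) = X^q - X` in `Fq[X]`. -/
lemma prod_X_sub_C_univ : ∏ a : Fq, (X - C a) = X ^ (Fintype.card Fq) - X := by
  have hmonic : (X ^ (Fintype.card Fq) - X : Polynomial Fq).Monic :=
    monic_X_pow_sub (by simpa using (by exact_mod_cast hq1 Fq : (1:ℕ∞) < Fintype.card Fq))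
  have hroots := FiniteField.roots_X_pow_card_sub_X Fq
  have hdeg := FiniteField.X_pow_card_sub_X_natDegree_eq Fq (hq1 Fq)
  have h := Polynomial.C_leadingCoeff_mul_prod_multiset_X_sub_C
    (p := (X ^ (Fintype.card Fq) - X : Polynomial Fq)) (by rw [hroots, hdeg]; simp)
  rw [hmonic.leadingCoeff, map_one, one_mul, hroots] at h
  rw [Finset.prod_eq_multiset_prod]
  exact h

end S7

namespace S7b
open S7
variable (Fq : Type) [Field Fq] [Fintype Fq]

/-- `∏_{a ≠ 0} (X - C a) = X^{q-1} - 1` in `Fq[X]`. -/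
lemma prod_X_sub_C_ne :
    ∏ a ∈ (Finset.univ \ {0} : Finset Fq), (X - C a) = X ^ (Fintype.card Fq - 1) - 1 := by
  have h0 : (0 : Fq) ∈ (Finset.univ : Finset Fq) := Finset.mem_univ 0
  have hsplit := Finset.prod_eq_prod_diff_singleton_mul h0 (fun a => (X - C a : Polynomial Fq))
  rw [prod_X_sub_C_univ Fq] at hsplit
  have hX : (X ^ (Fintype.card Fq) - X : Polynomial Fq)
      = (X ^ (Fintype.card Fq - 1) - 1) * X := by
    rw [sub_mul, one_mul, ← pow_succ, hq1' Fq]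
  rw [hX] at hsplit
  simp only [map_zero, sub_zero] at hsplit
  exact (mul_right_cancel₀ X_ne_zero hsplit.symm)

/-- `∏_{a ≠ 0} a = -1` packaged as evaluation at 0. -/
lemma prod_neg_units :
    ∏ a ∈ (Finset.univ \ {0} : Finset Fq), (-a) = (-1 : Fq) := by
  have h := congrArg (Polynomial.eval 0) (prod_X_sub_C_ne Fq)
  rw [Polynomial.eval_prod] at h
  simp only [Polynomial.eval_sub, Polynomial.eval_X, Polynomial.eval_C, Polynomial.eval_pow,
    Polynomial.eval_one, zero_sub] at h
  rw [h, zero_pow (by have := hq1 Fq; omega), zero_sub]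

/-- `∏_{a ≠ 0} (1 - C a * X) = 1 - X^{q-1}` in `Fq[X]`. -/
lemma prod_one_sub_C_mul :
    ∏ a ∈ (Finset.univ \ {0} : Finset Fq), (1 - C a * X)
      = 1 - X ^ (Fintype.card Fq - 1) := by
  have hfac : ∀ a ∈ (Finset.univ \ {0} : Finset Fq),
      (1 - C a * X : Polynomial Fq) = C (-a) * (X - C a⁻¹) := by
    intro a ha
    have ha0 : a ≠ 0 := by simpa using (Finset.mem_sdiff.mp ha).2
    rw [mul_sub, ← C_mul, neg_mul, mul_inv_cancel₀ ha0, map_neg, map_neg, map_one]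
    ring
  rw [Finset.prod_congr rfl hfac, Finset.prod_mul_distrib, ← map_prod, prod_neg_units Fq]
  have hinv : ∏ a ∈ (Finset.univ \ {0} : Finset Fq), (X - C a⁻¹ : Polynomial Fq)
      = ∏ a ∈ (Finset.univ \ {0} : Finset Fq), (X - C a) := by
    refine Finset.prod_nbij' (fun a => a⁻¹) (fun a => a⁻¹) ?_ ?_ ?_ ?_ ?_
    · intro a ha; simp only [Finset.mem_sdiff, Finset.mem_univ, Finset.mem_singleton] at *
      exact ⟨trivial, inv_ne_zero (by simpa using ha.2)⟩
    · intro a ha; simp only [Finset.mem_sdiff, Finset.mem_univ, Finset.mem_singleton] at *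
      exact ⟨trivial, inv_ne_zero (by simpa using ha.2)⟩
    · intro a _; simp
    · intro a _; simp
    · intro a _; rfl
  rw [hinv, prod_X_sub_C_ne Fq]
  rw [map_neg, map_one, neg_one_mul, neg_sub]

end S7b

namespace S7c
open S7 S7b
variable (Fq : Type) [Field Fq] [Fintype Fq]

/-- The embedding `Fq →+* K = RatFunc Fq`. -/
noncomputable def ψ : Fq →+* RatFunc Fq :=
  (algebraMap (Polynomial Fq) (RatFunc Fq)).comp Polynomial.C

lemma ψ_inj : Function.Injective (ψ Fq) := (ψ Fq).injective

lemma card_ne : (Finset.univ \ {0} : Finset Fq).card = Fintype.card Fq - 1 := by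
  rw [Finset.card_sdiff_of_subset (Finset.subset_univ {0}), Finset.card_singleton, Finset.card_univ]

/-- `∏_{a ≠ 0} (1 - C (ψ a) * t) = 1 - t^{q-1}` in `K[X]`. -/
lemma prod_one_sub_smul (t : Polynomial (RatFunc Fq)) :
    ∏ a ∈ (Finset.univ \ {0} : Finset Fq), (1 - C (ψ Fq a) * t)
      = 1 - t ^ (Fintype.card Fq - 1) := by
  have h := congrArg (Polynomial.eval₂RingHom (C.comp (ψ Fq)) t) (prod_one_sub_C_mul Fq)
  simp only [map_prod, map_sub, map_one, map_mul, coe_eval₂RingHom, eval₂_C, eval₂_X,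
    eval₂_one, eval₂_pow, RingHom.coe_comp, Function.comp_apply] at h
  exact h

/-- `∏_{a ≠ 0} (X - C (ψ a)) = X^{q-1} - 1` in `K[X]`. -/
lemma prod_X_sub_ψ :
    ∏ a ∈ (Finset.univ \ {0} : Finset Fq), (X - C (ψ Fq a))
      = X ^ (Fintype.card Fq - 1) - 1 := by
  have h := congrArg (Polynomial.eval₂RingHom (C.comp (ψ Fq)) X) (prod_X_sub_C_ne Fq)
  simp only [map_prod, map_sub, map_one, coe_eval₂RingHom, eval₂_C, eval₂_X,
    eval₂_pow, RingHom.coe_comp, Function.comp_apply] at h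
  exact h

/-- `∏_{a ≠ 0} (X - C (ψ a * c)) = X^{q-1} - C (c^{q-1})` in `K[X]`, for `c ≠ 0`. -/
lemma prod_X_sub_smul (c : RatFunc Fq) (hc : c ≠ 0) :
    ∏ a ∈ (Finset.univ \ {0} : Finset Fq), (X - C (ψ Fq a * c))
      = X ^ (Fintype.card Fq - 1) - C (c ^ (Fintype.card Fq - 1)) := by
  have h := congrArg (Polynomial.eval₂RingHom (C : RatFunc Fq →+* _) (C c⁻¹ * X))
    (prod_X_sub_ψ Fq)
  simp only [map_prod, map_sub, map_one, coe_eval₂RingHom, eval₂_C, eval₂_X,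
    eval₂_pow] at h
  have h2 : ∀ a ∈ (Finset.univ \ {0} : Finset Fq),
      (X - C (ψ Fq a * c) : Polynomial (RatFunc Fq))
        = C c * (C c⁻¹ * X - C (ψ Fq a)) := by
    intro a _
    rw [mul_sub, ← mul_assoc, ← C_mul, mul_inv_cancel₀ hc, map_one, one_mul, ← C_mul,
      mul_comm c (ψ Fq a)]
  rw [Finset.prod_congr rfl h2, Finset.prod_mul_distrib, Finset.prod_const, card_ne, h,
    mul_sub, mul_one, mul_pow, ← C_pow, ← C_pow, ← mul_assoc, ← C_mul, ← mul_pow,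
    mul_inv_cancel₀ hc, one_pow, map_one, one_mul]

end S7c

namespace S7d
open S7 S7b S7c
variable (Fq : Type) [Field Fq] [Fintype Fq]

lemma char_facts : ∃ e : ℕ+, (ringChar Fq).Prime ∧ Fintype.card Fq = (ringChar Fq) ^ (e : ℕ) :=
  FiniteField.card Fq (ringChar Fq)

lemma charP_K : CharP (RatFunc Fq) (ringChar Fq) :=
  charP_of_injective_ringHom (RatFunc.algebraMap_injective Fq) _

/-- Freshman's dream for `q`-th powers of sums, in any `K`-algebra-ish ring
with `CharP = ringChar Fq`. -/
lemma sum_pow_card {R : Type} [CommRing R] [CharP R (ringChar Fq)] {ι : Type}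
    (s : Finset ι) (f : ι → R) :
    (∑ i ∈ s, f i) ^ (Fintype.card Fq) = ∑ i ∈ s, f i ^ (Fintype.card Fq) := by
  obtain ⟨e, hp, hcard⟩ := char_facts Fq
  haveI : Fact (ringChar Fq).Prime := ⟨hp⟩
  rw [hcard]
  exact sum_pow_char_pow _ _ s f

lemma sub_pow_card_pow {R : Type} [CommRing R] [CharP R (ringChar Fq)] (x y : R) (m : ℕ) :
    (x - y) ^ (Fintype.card Fq) ^ m = x ^ (Fintype.card Fq) ^ m - y ^ (Fintype.card Fq) ^ m := by
  obtain ⟨e, hp, hcard⟩ := char_facts Fq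
  haveI : Fact (ringChar Fq).Prime := ⟨hp⟩
  rw [hcard, ← pow_mul, sub_pow_char_pow]

lemma neg_one_pow_card {R : Type} [CommRing R] [CharP R (ringChar Fq)] :
    (-1 : R) ^ (Fintype.card Fq) = -1 := by
  obtain ⟨e, hp, hcard⟩ := char_facts Fq
  haveI : Fact (ringChar Fq).Prime := ⟨hp⟩
  rw [hcard]
  exact neg_one_pow_char_pow R _ _

lemma ψ_pow_card (a : Fq) : (ψ Fq a) ^ (Fintype.card Fq) = ψ Fq a := by
  rw [← map_pow, FiniteField.pow_card]

lemma ψ_pow_card_pow (a : Fq) (m : ℕ) : (ψ Fq a) ^ (Fintype.card Fq) ^ m = ψ Fq a := by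
  rw [← map_pow, FiniteField.pow_card_pow]

end S7d

namespace S7e
open S7 S7b S7c S7d
variable (Fq : Type) [Field Fq] [Fintype Fq]

/-- `a_c = Σ_i c_i θ^i`, the generic polynomial of degree `< n`. -/
noncomputable def av (n : ℕ) (c : Fin n → Fq) : Polynomial Fq :=
  ∑ i : Fin n, Polynomial.C (c i) * Polynomial.X ^ (i : ℕ)

noncomputable def aK (n : ℕ) (c : Fin n → Fq) : RatFunc Fq :=
  algebraMap (Polynomial Fq) (RatFunc Fq) (av Fq n c)

noncomputable def θK (n : ℕ) : RatFunc Fq :=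
  algebraMap (Polynomial Fq) (RatFunc Fq) (X ^ n)

lemma av_coeff_ge (n : ℕ) (c : Fin n → Fq) (j : ℕ) (hj : n ≤ j) : (av Fq n c).coeff j = 0 := by
  rw [av, Polynomial.finset_sum_coeff]
  refine Finset.sum_eq_zero fun i _ => ?_
  rw [coeff_C_mul, coeff_X_pow]
  have := i.isLt
  rw [if_neg (by omega), mul_zero]

lemma av_coeff_lt (n : ℕ) (c : Fin n → Fq) (i : Fin n) : (av Fq n c).coeff i = c i := by
  rw [av, Polynomial.finset_sum_coeff]
  rw [Finset.sum_eq_single i]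
  · rw [coeff_C_mul, coeff_X_pow, if_pos rfl, mul_one]
  · intro b _ hb
    rw [coeff_C_mul, coeff_X_pow, if_neg (fun h => hb (Fin.ext h.symm)), mul_zero]
  · intro h; exact absurd (Finset.mem_univ i) h

lemma av_zero (n : ℕ) : av Fq n (0 : Fin n → Fq) = 0 := by
  simp [av]

lemma aK_zero (n : ℕ) : aK Fq n (0 : Fin n → Fq) = 0 := by
  rw [aK, av_zero, map_zero]

lemma aK_ne_zero {n : ℕ} {c : Fin n → Fq} (hc : c ≠ 0) : aK Fq n c ≠ 0 := by
  rw [aK, Ne, map_eq_zero_iff _ (RatFunc.algebraMap_injective Fq)]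
  intro h
  exact hc (funext fun i => by rw [← av_coeff_lt Fq n c i, h, Polynomial.coeff_zero]; rfl)

lemma av_smul (n : ℕ) (l : Fq) (c : Fin n → Fq) :
    av Fq n (fun i => l * c i) = C l * av Fq n c := by
  rw [av, av, Finset.mul_sum]
  refine Finset.sum_congr rfl fun i _ => ?_
  rw [map_mul, mul_assoc]

lemma aK_smul (n : ℕ) (l : Fq) (c : Fin n → Fq) :
    aK Fq n (fun i => l * c i) = ψ Fq l * aK Fq n c := by
  rw [aK, av_smul, map_mul, aK]; rfl

lemma θK_ne_zero (n : ℕ) : θK Fq n ≠ 0 := by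
  rw [θK, Ne, map_eq_zero_iff _ (RatFunc.algebraMap_injective Fq)]
  exact pow_ne_zero n X_ne_zero

lemma aK_ne_θK (n : ℕ) (c : Fin n → Fq) : aK Fq n c ≠ θK Fq n := by
  rw [aK, θK, Ne, (RatFunc.algebraMap_injective Fq).eq_iff]
  intro h
  have h1 := av_coeff_ge Fq n c n le_rfl
  rw [h, coeff_X_pow, if_pos rfl] at h1
  exact one_ne_zero h1

lemma u_ne_zero (n : ℕ) (c : Fin n → Fq) {l : Fq} (hl : l ≠ 0) :
    aK Fq n c + ψ Fq l * θK Fq n ≠ 0 := by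
  have : ψ Fq l * θK Fq n = algebraMap (Polynomial Fq) (RatFunc Fq) (C l * X ^ n) := by
    rw [map_mul]; rfl
  rw [aK, this, ← map_add, Ne, map_eq_zero_iff _ (RatFunc.algebraMap_injective Fq)]
  intro h
  have h1 := congrArg (fun p => Polynomial.coeff p n) h
  simp only [Polynomial.coeff_add, coeff_C_mul, coeff_X_pow, if_pos rfl, if_true,
    eq_self_iff_true, mul_one, Polynomial.coeff_zero] at h1
  rw [av_coeff_ge Fq n c n le_rfl, zero_add] at h1
  exact hl h1

/-- The coefficients `κ_{n,m}`. -/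
noncomputable def κ (n m : ℕ) : RatFunc Fq :=
  (-1 : RatFunc Fq) ^ m * Slt Fq (zagTuple Fq m) n

/-- The target polynomial `R_n = Σ_m κ_{n,m} X^{q^m}`. -/
noncomputable def Rp (n : ℕ) : Polynomial (RatFunc Fq) :=
  ∑ m ∈ Finset.range (n + 1), C (κ Fq n m) * X ^ Fintype.card Fq ^ m

lemma Slt_nil (d : ℕ) : Slt Fq [] d = 1 := rfl

lemma Slt_cons (h : ℕ) (rest : List ℕ) (d : ℕ) :
    Slt Fq (h :: rest) d = ∑ i ∈ Finset.range d, powerSum Fq i h * Slt Fq rest i := rfl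

lemma zag_zero : zagTuple Fq 0 = [] := rfl

lemma κ_zero (n : ℕ) : κ Fq n 0 = 1 := by
  rw [κ, pow_zero, zag_zero, Slt_nil, one_mul]

lemma coeff_Rp (n j : ℕ) :
    (Rp Fq n).coeff j
      = ∑ m ∈ Finset.range (n + 1), if j = Fintype.card Fq ^ m then κ Fq n m else 0 := by
  rw [Rp, Polynomial.finset_sum_coeff]
  refine Finset.sum_congr rfl fun m _ => ?_
  rw [coeff_C_mul, coeff_X_pow]
  split <;> simp

lemma coeff_Rp_one (n : ℕ) : (Rp Fq n).coeff 1 = 1 := by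
  rw [coeff_Rp, Finset.sum_eq_single 0]
  · rw [pow_zero, if_pos rfl, κ_zero]
  · intro m _ hm
    rw [if_neg]
    exact Nat.ne_of_lt (Nat.one_lt_pow hm (hq1 Fq))
  · intro h; exact absurd (Finset.mem_range.mpr (Nat.succ_pos n)) h

lemma pow_q_Rp (n : ℕ) :
    (Rp Fq n) ^ (Fintype.card Fq)
      = ∑ m ∈ Finset.range (n + 1), C ((κ Fq n m) ^ (Fintype.card Fq))
          * X ^ Fintype.card Fq ^ (m + 1) := by
  haveI := charP_K Fq
  rw [Rp, sum_pow_card Fq]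
  refine Finset.sum_congr rfl fun m _ => ?_
  rw [mul_pow, ← C_pow, ← pow_mul, ← pow_succ]

lemma coeff_pow_q_Rp_one (n : ℕ) : ((Rp Fq n) ^ (Fintype.card Fq)).coeff 1 = 0 := by
  rw [pow_q_Rp, Polynomial.finset_sum_coeff]
  refine Finset.sum_eq_zero fun m _ => ?_
  rw [coeff_C_mul, coeff_X_pow, if_neg (Nat.ne_of_lt (Nat.one_lt_pow (Nat.succ_ne_zero m)
    (hq1 Fq))), mul_zero]

lemma coeff_pow_q_Rp_q (n : ℕ) :
    ((Rp Fq n) ^ (Fintype.card Fq)).coeff (Fintype.card Fq) = 1 := by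
  rw [pow_q_Rp, Polynomial.finset_sum_coeff, Finset.sum_eq_single 0]
  · rw [coeff_C_mul, coeff_X_pow, zero_add, pow_one, if_pos rfl, κ_zero, one_pow, mul_one]
  · intro m _ hm
    rw [coeff_C_mul, coeff_X_pow, if_neg, mul_zero]
    intro h
    have h2 : Fintype.card Fq ^ 1 = Fintype.card Fq ^ (m + 1) := by rw [pow_one]; exact h
    have := Nat.pow_right_injective (hq1 Fq) h2
    omega
  · intro h; exact absurd (Finset.mem_range.mpr (Nat.succ_pos n)) h

lemma Rp_comp (n : ℕ) (b : RatFunc Fq) :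
    eval₂ C (X - C b) (Rp Fq n) = Rp Fq n - C (Polynomial.eval b (Rp Fq n)) := by
  haveI := charP_K Fq
  rw [Rp, Polynomial.eval₂_finset_sum]
  have : ∀ m ∈ Finset.range (n + 1),
      eval₂ C (X - C b) (C (κ Fq n m) * X ^ Fintype.card Fq ^ m)
        = C (κ Fq n m) * X ^ Fintype.card Fq ^ m
          - C (κ Fq n m * b ^ Fintype.card Fq ^ m) := by
    intro m _
    rw [eval₂_mul, eval₂_C, eval₂_pow, eval₂_X, sub_pow_card_pow Fq, ← C_pow, mul_sub, ← C_mul]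
  rw [Finset.sum_congr rfl this, Finset.sum_sub_distrib, ← map_sum]
  congr 2
  rw [Polynomial.eval_finset_sum]
  refine Finset.sum_congr rfl fun m _ => ?_
  rw [Polynomial.eval_mul, Polynomial.eval_C, Polynomial.eval_pow, Polynomial.eval_X]

lemma Rp_eval_smul (n : ℕ) (l : Fq) (x : RatFunc Fq) :
    Polynomial.eval (ψ Fq l * x) (Rp Fq n) = ψ Fq l * Polynomial.eval x (Rp Fq n) := by
  rw [Rp, Polynomial.eval_finset_sum, Polynomial.eval_finset_sum, Finset.mul_sum]
  refine Finset.sum_congr rfl fun m _ => ?_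
  simp only [Polynomial.eval_mul, Polynomial.eval_C, Polynomial.eval_pow, Polynomial.eval_X,
    mul_pow, ψ_pow_card_pow Fq l m]
  ring

lemma Slt_eq_zero {l : List ℕ} : ∀ {d : ℕ}, d < l.length → Slt Fq l d = 0 := by
  induction l with
  | nil => intro d hd; simp at hd
  | cons h rest ih =>
    intro d hd
    rw [Slt_cons]
    refine Finset.sum_eq_zero fun i hi => ?_
    rw [ih, mul_zero]
    have := Finset.mem_range.mp hi
    simp only [List.length_cons] at hd
    omega

lemma powerSum_mul_card (d k : ℕ) :
    powerSum Fq d (Fintype.card Fq * k) = (powerSum Fq d k) ^ (Fintype.card Fq) := by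
  haveI := charP_K Fq
  rw [powerSum, powerSum, sum_pow_card Fq]
  refine Finset.sum_congr rfl fun c _ => ?_
  rw [mul_comm, pow_mul]

lemma Slt_map_mul (l : List ℕ) : ∀ d : ℕ,
    Slt Fq (l.map (fun s => Fintype.card Fq * s)) d = (Slt Fq l d) ^ (Fintype.card Fq) := by
  haveI := charP_K Fq
  induction l with
  | nil => intro d; rw [List.map_nil]; exact (one_pow _).symm
  | cons h rest ih =>
    intro d
    rw [List.map_cons, Slt_cons, Slt_cons, sum_pow_card Fq]
    refine Finset.sum_congr rfl fun i _ => ?_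
    rw [powerSum_mul_card, ih, mul_pow]

lemma zag_succ (m : ℕ) : zagTuple Fq (m + 1)
    = (Fintype.card Fq - 1) :: (zagTuple Fq m).map (fun s => Fintype.card Fq * s) := by
  rw [zagTuple, zagTuple, List.range_succ_eq_map, List.map_cons, List.map_map, List.map_map]
  refine congrArg₂ _ (by rw [pow_zero, mul_one]) ?_
  refine List.map_congr_left fun i _ => ?_
  simp only [Function.comp_apply]
  rw [pow_succ]
  ring

end S7e

namespace S7f
open S7 S7b S7c S7d S7e
variable (Fq : Type) [Field Fq] [Fintype Fq]

lemma carlitz_def (n : ℕ) :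
    carlitzHayes Fq n
      = X * ∏ c : Fin n → Fq, (if c = 0 then 1 else 1 - C ((aK Fq n c)⁻¹) * X) := rfl

lemma coeff_one_carlitz (n : ℕ) : (carlitzHayes Fq n).coeff 1 = 1 := by
  rw [carlitz_def, Polynomial.coeff_X_mul, Polynomial.coeff_zero_eq_eval_zero,
    Polynomial.eval_prod]
  refine Finset.prod_eq_one fun c _ => ?_
  split
  · rw [Polynomial.eval_one]
  · simp

lemma eval_carlitz_ne_zero (n : ℕ) :
    Polynomial.eval (θK Fq n) (carlitzHayes Fq n) ≠ 0 := by
  rw [carlitz_def, Polynomial.eval_mul, Polynomial.eval_X, Polynomial.eval_prod]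
  refine mul_ne_zero (θK_ne_zero Fq n) (Finset.prod_ne_zero_iff.mpr fun c _ => ?_)
  split
  · rw [Polynomial.eval_one]; exact one_ne_zero
  · next hc =>
    simp only [Polynomial.eval_sub, Polynomial.eval_one, Polynomial.eval_mul,
      Polynomial.eval_C, Polynomial.eval_X]
    intro h
    have h1 : (aK Fq n c)⁻¹ * θK Fq n = 1 := by
      have := sub_eq_zero.mp h; exact this.symm
    exact aK_ne_θK Fq n c ((inv_mul_eq_one₀ (aK_ne_zero Fq hc)).mp h1)

/-- The normalizing constant `D_n = ∏_{a ≠ 0, deg < n} (-a)`. -/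
noncomputable def Dn (n : ℕ) : RatFunc Fq :=
  ∏ c : Fin n → Fq, (if c = 0 then 1 else -(aK Fq n c))

lemma prod_X_sub_aK (n : ℕ) :
    ∏ c : Fin n → Fq, (X - C (aK Fq n c)) = C (Dn Fq n) * carlitzHayes Fq n := by
  have step : ∀ c : Fin n → Fq,
      (X - C (aK Fq n c) : Polynomial (RatFunc Fq))
        = (C (if c = 0 then 1 else -(aK Fq n c)))
          * ((if c = 0 then (X : Polynomial (RatFunc Fq)) else 1)
            * (if c = 0 then 1 else 1 - C ((aK Fq n c)⁻¹) * X)) := by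
    intro c
    by_cases hc : c = 0
    · simp [hc, aK_zero]
    · rw [if_neg hc, if_neg hc, if_neg hc, one_mul, map_neg, neg_mul, mul_sub, mul_one,
        ← mul_assoc, ← C_mul, mul_inv_cancel₀ (aK_ne_zero Fq hc), map_one, one_mul, neg_sub]
  rw [Finset.prod_congr rfl (fun c _ => step c), Finset.prod_mul_distrib,
    Finset.prod_mul_distrib,
    Finset.prod_ite_eq' Finset.univ (0 : Fin n → Fq)
      (fun _ => (X : Polynomial (RatFunc Fq)))]
  rw [if_pos (Finset.mem_univ _), ← map_prod, ← Dn, ← carlitz_def]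

/-- Splitting off the top coefficient:
`E_{n+1} = E_n · ∏_{λ≠0} ∏_{c'} (1 - (a_{c'} + λθ^n)⁻¹ X)`. -/
lemma carlitz_succ (n : ℕ) :
    carlitzHayes Fq (n + 1)
      = carlitzHayes Fq n
        * ∏ l ∈ (Finset.univ \ {0} : Finset Fq), ∏ c : Fin n → Fq,
            (1 - C ((aK Fq n c + ψ Fq l * θK Fq n)⁻¹) * X) := by
  have key : ∀ c : Fin (n+1) → Fq,
      aK Fq (n+1) c
        = aK Fq n (fun i => c i.castSucc) + ψ Fq (c (Fin.last n)) * θK Fq n := by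
    intro c
    have hav : av Fq (n+1) c = av Fq n (fun i => c i.castSucc) + C (c (Fin.last n)) * X ^ n := by
      rw [av, av, Fin.sum_univ_castSucc]
      simp [Fin.coe_castSucc, Fin.val_last]
    have : ψ Fq (c (Fin.last n)) * θK Fq n
        = algebraMap (Polynomial Fq) (RatFunc Fq) (C (c (Fin.last n)) * X ^ n) := by
      rw [map_mul]; rfl
    rw [aK, hav, map_add, this, aK]
  have hzero : ∀ c : Fin (n+1) → Fq,
      (c = 0) ↔ (c (Fin.last n) = 0 ∧ (fun i => c i.castSucc) = (0 : Fin n → Fq)) := by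
    intro c
    constructor
    · intro h; subst h; exact ⟨rfl, rfl⟩
    · rintro ⟨h1, h2⟩
      funext i
      refine Fin.lastCases h1 (fun j => ?_) i
      exact congrFun h2 j
  have equiv_prod :
      (∏ c : Fin (n+1) → Fq, (if c = 0 then 1 else 1 - C ((aK Fq (n+1) c)⁻¹) * X))
        = ∏ l : Fq, ∏ c : Fin n → Fq,
            (if (l = 0 ∧ c = 0) then 1
              else 1 - C ((aK Fq n c + ψ Fq l * θK Fq n)⁻¹) * X) := by
    refine Eq.trans (Fintype.prod_equiv ((Fin.insertNthEquiv (fun _ => Fq) (Fin.last n)).symm)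
      _ (fun p => if (p.1 = 0 ∧ p.2 = 0) then 1
          else 1 - C ((aK Fq n p.2 + ψ Fq p.1 * θK Fq n)⁻¹) * X)
      (fun c => ?_)) (Fintype.prod_prod_type _)
    have he : ((Fin.insertNthEquiv (fun _ => Fq) (Fin.last n)).symm) c
        = (c (Fin.last n), fun i => c ((Fin.last n).succAbove i)) := rfl
    rw [he]
    simp only [Fin.succAbove_last]
    rw [key c]
    exact if_congr (hzero c) rfl rfl
  rw [carlitz_def Fq (n+1), equiv_prod,
    Finset.prod_eq_prod_diff_singleton_mul (Finset.mem_univ (0 : Fq))]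
  have h0 : (∏ c : Fin n → Fq,
      (if ((0:Fq) = 0 ∧ c = 0) then 1
        else 1 - C ((aK Fq n c + ψ Fq 0 * θK Fq n)⁻¹) * X))
      = ∏ c : Fin n → Fq, (if c = 0 then 1 else 1 - C ((aK Fq n c)⁻¹) * X) := by
    refine Finset.prod_congr rfl fun c _ => ?_
    simp [map_zero]
  have hne : ∀ l ∈ (Finset.univ \ {0} : Finset Fq),
      (∏ c : Fin n → Fq,
        (if (l = 0 ∧ c = 0) then 1
          else 1 - C ((aK Fq n c + ψ Fq l * θK Fq n)⁻¹) * X))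
        = ∏ c : Fin n → Fq, (1 - C ((aK Fq n c + ψ Fq l * θK Fq n)⁻¹) * X) := by
    intro l hl
    have hl0 : l ≠ 0 := by simpa using (Finset.mem_sdiff.mp hl).2
    refine Finset.prod_congr rfl fun c _ => ?_
    rw [if_neg (fun h => hl0 h.1)]
  rw [h0, Finset.prod_congr rfl hne, carlitz_def Fq n]
  ring

end S7f

namespace S7g
open S7 S7b S7c S7d S7e S7f
variable (Fq : Type) [Field Fq] [Fintype Fq]

/-- Route A: under the induction hypothesis, `E_{n+1} = δ·(R_n^q - c^{q-1} R_n)`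
with `δ·c^{q-1} = -1`, where `c = R_n(θ^n)`. -/
lemma routeA (n : ℕ) (IH : carlitzHayes Fq n = Rp Fq n) :
    ∃ δ : RatFunc Fq,
      δ * (Polynomial.eval (θK Fq n) (Rp Fq n)) ^ (Fintype.card Fq - 1) = -1 ∧
      carlitzHayes Fq (n + 1)
        = C δ * ((Rp Fq n) ^ (Fintype.card Fq)
            - C ((Polynomial.eval (θK Fq n) (Rp Fq n)) ^ (Fintype.card Fq - 1)) * Rp Fq n) := by
  set cv : RatFunc Fq := Polynomial.eval (θK Fq n) (Rp Fq n) with hcv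
  have hc : cv ≠ 0 := by
    rw [hcv, ← IH]; exact eval_carlitz_ne_zero Fq n
  have inner : ∀ l ∈ (Finset.univ \ {0} : Finset Fq),
      (∏ c : Fin n → Fq, (1 - C ((aK Fq n c + ψ Fq l * θK Fq n)⁻¹) * X))
        = C ((∏ c : Fin n → Fq, (-(aK Fq n c + ψ Fq l * θK Fq n))⁻¹) * Dn Fq n)
            * (Rp Fq n - C (ψ Fq l * cv)) := by
    intro l hlmem
    have hl : l ≠ 0 := by simpa using (Finset.mem_sdiff.mp hlmem).2
    have hfac : ∀ c : Fin n → Fq,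
        (1 - C ((aK Fq n c + ψ Fq l * θK Fq n)⁻¹) * X : Polynomial (RatFunc Fq))
          = C ((-(aK Fq n c + ψ Fq l * θK Fq n))⁻¹)
            * (X - C (aK Fq n c + ψ Fq l * θK Fq n)) := by
      intro c
      have hu : aK Fq n c + ψ Fq l * θK Fq n ≠ 0 := u_ne_zero Fq n c hl
      rw [inv_neg, map_neg, neg_mul, mul_sub, ← C_mul, inv_mul_cancel₀ hu, map_one, neg_sub]
    rw [Finset.prod_congr rfl (fun c _ => hfac c), Finset.prod_mul_distrib, ← map_prod]
    have hcomp : (∏ c : Fin n → Fq,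
        (X - C (aK Fq n c + ψ Fq l * θK Fq n) : Polynomial (RatFunc Fq)))
          = eval₂ C (X - C (ψ Fq l * θK Fq n)) (∏ c : Fin n → Fq, (X - C (aK Fq n c))) := by
      rw [← Polynomial.coe_eval₂RingHom, map_prod]
      refine Finset.prod_congr rfl fun c _ => ?_
      rw [Polynomial.coe_eval₂RingHom, eval₂_sub, eval₂_X, eval₂_C, sub_sub, ← map_add,
        add_comm (ψ Fq l * θK Fq n)]
    have heval : eval₂ C (X - C (ψ Fq l * θK Fq n)) (C (Dn Fq n) * Rp Fq n)
        = C (Dn Fq n) * (Rp Fq n - C (ψ Fq l * cv)) := by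
      rw [eval₂_mul, eval₂_C, Rp_comp, Rp_eval_smul, ← hcv]
    rw [hcomp, prod_X_sub_aK, IH, heval, ← mul_assoc, ← C_mul]
  have hsmul : (∏ l ∈ (Finset.univ \ {0} : Finset Fq), (Rp Fq n - C (ψ Fq l * cv)))
      = (Rp Fq n) ^ (Fintype.card Fq - 1) - C (cv ^ (Fintype.card Fq - 1)) := by
    have h := congrArg (Polynomial.aeval (Rp Fq n) :
        Polynomial (RatFunc Fq) →ₐ[RatFunc Fq] Polynomial (RatFunc Fq))
      (prod_X_sub_smul Fq cv hc)
    simp only [map_prod, map_sub, map_pow, Polynomial.aeval_X, Polynomial.aeval_C,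
      Polynomial.algebraMap_eq] at h
    rw [← C_pow] at h
    exact h
  refine ⟨∏ l ∈ (Finset.univ \ {0} : Finset Fq),
    ((∏ c : Fin n → Fq, (-(aK Fq n c + ψ Fq l * θK Fq n))⁻¹) * Dn Fq n), ?_, ?_⟩
  case refine_2 =>
    rw [carlitz_succ, Finset.prod_congr rfl inner, Finset.prod_mul_distrib, ← map_prod,
      hsmul, IH]
    have hpow : (Rp Fq n) ^ (Fintype.card Fq)
        = (Rp Fq n) ^ (Fintype.card Fq - 1) * Rp Fq n := by
      rw [← pow_succ, hq1']
    rw [hpow]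
    ring
  case refine_1 =>
    have hEform : carlitzHayes Fq (n + 1)
        = C (∏ l ∈ (Finset.univ \ {0} : Finset Fq),
            ((∏ c : Fin n → Fq, (-(aK Fq n c + ψ Fq l * θK Fq n))⁻¹) * Dn Fq n))
          * ((Rp Fq n) ^ (Fintype.card Fq)
              - C (cv ^ (Fintype.card Fq - 1)) * Rp Fq n) := by
      rw [carlitz_succ, Finset.prod_congr rfl inner, Finset.prod_mul_distrib, ← map_prod,
        hsmul, IH]
      have hpow : (Rp Fq n) ^ (Fintype.card Fq)
          = (Rp Fq n) ^ (Fintype.card Fq - 1) * Rp Fq n := by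
        rw [← pow_succ, hq1']
      rw [hpow]
      ring
    have h1 := congrArg (fun P : Polynomial (RatFunc Fq) => P.coeff 1) hEform
    simp only [coeff_one_carlitz] at h1
    rw [Polynomial.coeff_C_mul, Polynomial.coeff_sub, coeff_pow_q_Rp_one,
      Polynomial.coeff_C_mul, coeff_Rp_one, mul_one, zero_sub, mul_neg] at h1
    linear_combination h1

end S7g

namespace S7h
open S7 S7b S7c S7d S7e S7f
variable (Fq : Type) [Field Fq] [Fintype Fq]

/-- The product over monic polynomials of degree `n`:
`Q_n = ∏_b (1 - b^{-(q-1)} X^{q-1})`. -/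
noncomputable def Qn (n : ℕ) : Polynomial (RatFunc Fq) :=
  ∏ c : Fin n → Fq,
    (1 - C (((algebraMap (Polynomial Fq) (RatFunc Fq) (monicOf Fq n c))⁻¹)
        ^ (Fintype.card Fq - 1)) * X ^ (Fintype.card Fq - 1))

lemma bK_eq (n : ℕ) (c : Fin n → Fq) :
    algebraMap (Polynomial Fq) (RatFunc Fq) (monicOf Fq n c) = θK Fq n + aK Fq n c := by
  rw [monicOf, map_add]; rfl

lemma routeB (n : ℕ) :
    carlitzHayes Fq (n + 1) = carlitzHayes Fq n * Qn Fq n := by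
  rw [carlitz_succ, Qn]
  congr 1
  have hre : ∀ l ∈ (Finset.univ \ {0} : Finset Fq),
      (∏ c : Fin n → Fq, (1 - C ((aK Fq n c + ψ Fq l * θK Fq n)⁻¹) * X))
        = ∏ c : Fin n → Fq,
            (1 - C ((ψ Fq l
              * algebraMap (Polynomial Fq) (RatFunc Fq) (monicOf Fq n c))⁻¹) * X) := by
    intro l hlm
    have hl : l ≠ 0 := by simpa using (Finset.mem_sdiff.mp hlm).2
    refine Fintype.prod_equiv
      (Equiv.piCongrRight fun _ : Fin n => Equiv.mulLeft₀ l⁻¹ (inv_ne_zero hl)) _ _ fun c => ?_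
    have he : (Equiv.piCongrRight fun _ : Fin n => Equiv.mulLeft₀ l⁻¹ (inv_ne_zero hl)) c
        = fun i => l⁻¹ * c i := rfl
    rw [he, bK_eq, aK_smul, mul_add, ← mul_assoc, ← map_mul, mul_inv_cancel₀ hl, map_one,
      one_mul, add_comm (ψ Fq l * θK Fq n)]
  rw [Finset.prod_congr rfl hre, Finset.prod_comm]
  refine Finset.prod_congr rfl fun c _ => ?_
  set b : RatFunc Fq := algebraMap (Polynomial Fq) (RatFunc Fq) (monicOf Fq n c) with hb
  have hinv : ∀ l ∈ (Finset.univ \ {0} : Finset Fq),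
      (1 - C ((ψ Fq l * b)⁻¹) * X : Polynomial (RatFunc Fq))
        = 1 - C (ψ Fq l⁻¹) * (C b⁻¹ * X) := by
    intro l hlm
    rw [mul_inv, map_inv₀, ← mul_assoc, ← C_mul]
  rw [Finset.prod_congr rfl hinv]
  have hre2 : (∏ l ∈ (Finset.univ \ {0} : Finset Fq),
      (1 - C (ψ Fq l⁻¹) * (C b⁻¹ * X) : Polynomial (RatFunc Fq)))
        = ∏ l ∈ (Finset.univ \ {0} : Finset Fq),
      (1 - C (ψ Fq l) * (C b⁻¹ * X) : Polynomial (RatFunc Fq)) := by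
    refine Finset.prod_nbij' (fun l => l⁻¹) (fun l => l⁻¹) ?_ ?_ ?_ ?_ ?_
    · intro a ha; simp only [Finset.mem_sdiff, Finset.mem_univ, Finset.mem_singleton,
        true_and] at *
      exact inv_ne_zero ha
    · intro a ha; simp only [Finset.mem_sdiff, Finset.mem_univ, Finset.mem_singleton,
        true_and] at *
      exact inv_ne_zero ha
    · intro a _; simp
    · intro a _; simp
    · intro a _; rfl
  rw [hre2, prod_one_sub_smul Fq (C b⁻¹ * X), mul_pow, ← C_pow]

end S7h

namespace S7i
open S7 S7b S7c S7d S7e S7f S7h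
variable (Fq : Type) [Field Fq] [Fintype Fq]

/-- Low-order coefficients of a product `∏ (1 - f i · X^k)`. -/
lemma coeff_prod_one_sub {ι : Type} (k : ℕ) (hk : 0 < k) (s : Finset ι)
    (f : ι → RatFunc Fq) :
    ((∏ i ∈ s, (1 - C (f i) * X ^ k)).coeff 0 = 1
      ∧ (∏ i ∈ s, (1 - C (f i) * X ^ k)).coeff k = -∑ i ∈ s, f i)
      ∧ ∀ j, 0 < j → j < k → (∏ i ∈ s, (1 - C (f i) * X ^ k)).coeff j = 0 := by
  classical
  induction s using Finset.induction with
  | empty =>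
    refine ⟨⟨by simp, ?_⟩, ?_⟩
    · rw [Finset.prod_empty, Polynomial.coeff_one, if_neg (by omega), Finset.sum_empty,
        neg_zero]
    · intro j hj _
      rw [Finset.prod_empty, Polynomial.coeff_one, if_neg (by omega)]
  | insert a s ha ih =>
    obtain ⟨⟨ih0, ihk⟩, ihmid⟩ := ih
    have expand : ∀ j : ℕ,
        ((∏ i ∈ insert a s, (1 - C (f i) * X ^ k)).coeff j)
          = (∏ i ∈ s, (1 - C (f i) * X ^ k)).coeff j
            - f a * (if k ≤ j then (∏ i ∈ s, (1 - C (f i) * X ^ k)).coeff (j - k) else 0) := by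
      intro j
      rw [Finset.prod_insert ha, sub_mul, one_mul, Polynomial.coeff_sub, mul_assoc,
        mul_comm ((X : Polynomial (RatFunc Fq)) ^ k), Polynomial.coeff_C_mul,
        Polynomial.coeff_mul_X_pow']
    refine ⟨⟨?_, ?_⟩, ?_⟩
    · rw [expand 0, if_neg (by omega), mul_zero, sub_zero, ih0]
    · rw [expand k, if_pos le_rfl, Nat.sub_self, ih0, ihk, mul_one, Finset.sum_insert ha]
      ring
    · intro j hj hjk
      rw [expand j, if_neg (by omega), mul_zero, sub_zero, ihmid j hj hjk]

lemma coeff_Qn_zero (n : ℕ) : (Qn Fq n).coeff 0 = 1 :=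
  ((coeff_prod_one_sub Fq (Fintype.card Fq - 1) (by have := hq1 Fq; omega) Finset.univ
    _).1).1

lemma coeff_Qn_top (n : ℕ) :
    (Qn Fq n).coeff (Fintype.card Fq - 1) = -powerSum Fq n (Fintype.card Fq - 1) :=
  ((coeff_prod_one_sub Fq (Fintype.card Fq - 1) (by have := hq1 Fq; omega) Finset.univ
    _).1).2

/-- Coefficient of `X^q` in `R_n · Q_n`. -/
lemma coeff_q_mul_Q (n : ℕ) :
    (Rp Fq n * Qn Fq n).coeff (Fintype.card Fq)
      = (Rp Fq n).coeff (Fintype.card Fq) - powerSum Fq n (Fintype.card Fq - 1) := by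
  rw [Rp, Finset.sum_mul, Polynomial.finset_sum_coeff]
  have key : ∀ m ∈ Finset.range (n + 1),
      (C (κ Fq n m) * X ^ Fintype.card Fq ^ m * Qn Fq n).coeff (Fintype.card Fq)
        = (if Fintype.card Fq = Fintype.card Fq ^ m then κ Fq n m else 0)
          + (if m = 0 then -powerSum Fq n (Fintype.card Fq - 1) else 0) := by
    intro m _
    rw [mul_assoc, mul_comm ((X : Polynomial (RatFunc Fq)) ^ Fintype.card Fq ^ m),
      Polynomial.coeff_C_mul, Polynomial.coeff_mul_X_pow']
    match m with
    | 0 =>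
      rw [pow_zero, if_pos (by have := hq1 Fq; omega), coeff_Qn_top,
        if_neg (by have := hq1 Fq; omega), if_pos rfl, zero_add, κ_zero, one_mul]
    | 1 =>
      rw [pow_one, if_pos le_rfl, Nat.sub_self, coeff_Qn_zero, mul_one, if_pos rfl,
        if_neg one_ne_zero, add_zero]
    | (m+2) =>
      have hgt : Fintype.card Fq < Fintype.card Fq ^ (m + 2) := by
        calc Fintype.card Fq = Fintype.card Fq ^ 1 := (pow_one _).symm
        _ < Fintype.card Fq ^ (m + 2) := Nat.pow_lt_pow_right (hq1 Fq) (by omega)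
      rw [if_neg (by omega), if_neg (by omega), if_neg (by omega), mul_zero, add_zero]
  rw [Finset.sum_congr rfl key, Finset.sum_add_distrib, Finset.sum_ite_eq'
    (Finset.range (n + 1)) 0 (fun _ => -powerSum Fq n (Fintype.card Fq - 1)),
    if_pos (Finset.mem_range.mpr (Nat.succ_pos n)), sub_eq_add_neg]
  congr 1
  rw [Polynomial.finset_sum_coeff]
  refine Finset.sum_congr rfl fun m _ => ?_
  rw [coeff_C_mul, coeff_X_pow]
  split <;> simp

/-- The inductive step: `E_{n+1} = R_n - S_n(q-1)·R_n^q`. -/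
lemma step (n : ℕ) (IH : carlitzHayes Fq n = Rp Fq n) :
    carlitzHayes Fq (n + 1)
      = Rp Fq n - C (powerSum Fq n (Fintype.card Fq - 1))
          * (Rp Fq n) ^ (Fintype.card Fq) := by
  obtain ⟨δ, hδ, hE⟩ := S7g.routeA Fq n IH
  set cq : RatFunc Fq :=
    (Polynomial.eval (θK Fq n) (Rp Fq n)) ^ (Fintype.card Fq - 1) with hcq
  set S : RatFunc Fq := powerSum Fq n (Fintype.card Fq - 1) with hS
  have hB : carlitzHayes Fq (n + 1) = Rp Fq n * Qn Fq n := by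
    rw [routeB, IH]
  -- compare the coefficient of `X^q` in the two expressions
  have hA1 := congrArg (fun P : Polynomial (RatFunc Fq) => P.coeff (Fintype.card Fq)) hE
  have hB1 := congrArg (fun P : Polynomial (RatFunc Fq) => P.coeff (Fintype.card Fq)) hB
  rw [coeff_q_mul_Q] at hB1
  rw [Polynomial.coeff_C_mul, Polynomial.coeff_sub, coeff_pow_q_Rp_q,
    Polynomial.coeff_C_mul] at hA1
  -- δ = -S
  have hδS : δ = -S := by
    have h2 : δ * (1 - cq * (Rp Fq n).coeff (Fintype.card Fq))
        = (Rp Fq n).coeff (Fintype.card Fq) - S := by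
      rw [← hB1, hA1]
    have h3 : δ * cq = -1 := hδ
    linear_combination h2 + (Rp Fq n).coeff (Fintype.card Fq) * h3
  have hScq : S * cq = 1 := by
    rw [hδS] at hδ
    linear_combination -hδ
  rw [hE, hδS]
  have hC : (C S : Polynomial (RatFunc Fq)) * C cq = 1 := by
    rw [← C_mul, hScq, map_one]
  rw [map_neg]
  linear_combination (Rp Fq n) * hC

end S7i

namespace S7j
open S7 S7b S7c S7d S7e
variable (Fq : Type) [Field Fq] [Fintype Fq]

lemma zag_length (m : ℕ) : (zagTuple Fq m).length = m := by
  rw [zagTuple, List.length_map, List.length_range]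

lemma κ_succ (n m : ℕ) :
    κ Fq (n + 1) (m + 1) = κ Fq n (m + 1)
      - powerSum Fq n (Fintype.card Fq - 1) * (κ Fq n m) ^ (Fintype.card Fq) := by
  haveI := charP_K Fq
  rw [κ, κ, κ, zag_succ, Slt_cons, Slt_cons]
  simp only [Slt_map_mul]
  rw [Finset.sum_range_succ]
  have hκq : ((-1 : RatFunc Fq) ^ m * Slt Fq (zagTuple Fq m) n) ^ (Fintype.card Fq)
      = (-1 : RatFunc Fq) ^ m * (Slt Fq (zagTuple Fq m) n) ^ (Fintype.card Fq) := by
    rw [mul_pow, ← pow_mul, mul_comm m, pow_mul, neg_one_pow_card Fq]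
  rw [hκq, pow_succ]
  ring

lemma Rp_succ (n : ℕ) :
    Rp Fq (n + 1)
      = Rp Fq n - C (powerSum Fq n (Fintype.card Fq - 1))
          * (Rp Fq n) ^ (Fintype.card Fq) := by
  have hzero : κ Fq n (n + 1) = 0 := by
    rw [κ, Slt_eq_zero Fq (by rw [zag_length]; omega), mul_zero]
  have e1 : Rp Fq (n + 1)
      = (∑ m ∈ Finset.range (n + 1),
          C (κ Fq (n + 1) (m + 1)) * X ^ Fintype.card Fq ^ (m + 1))
        + C (κ Fq (n + 1) 0) * X ^ Fintype.card Fq ^ 0 := by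
    rw [Rp, Finset.sum_range_succ']
  have e2 : Rp Fq n
      = (∑ m ∈ Finset.range (n + 1),
          C (κ Fq n (m + 1)) * X ^ Fintype.card Fq ^ (m + 1))
        + C (κ Fq n 0) * X ^ Fintype.card Fq ^ 0 := by
    rw [Rp, Finset.sum_range_succ', Finset.sum_range_succ, hzero, map_zero, zero_mul, add_zero]
  rw [e1, pow_q_Rp, e2, Finset.mul_sum, κ_zero, κ_zero]
  have key : ∀ m ∈ Finset.range (n + 1),
      C (κ Fq (n + 1) (m + 1)) * X ^ Fintype.card Fq ^ (m + 1)
        = C (κ Fq n (m + 1)) * X ^ Fintype.card Fq ^ (m + 1)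
          - C (powerSum Fq n (Fintype.card Fq - 1))
            * (C ((κ Fq n m) ^ (Fintype.card Fq)) * X ^ Fintype.card Fq ^ (m + 1)) := by
    intro m _
    rw [κ_succ, map_sub, map_mul]
    ring
  rw [Finset.sum_congr rfl key, Finset.sum_sub_distrib]
  ring

lemma carlitz_eq_Rp (n : ℕ) : carlitzHayes Fq n = Rp Fq n := by
  induction n with
  | zero =>
    rw [S7f.carlitz_def, Rp, Finset.sum_range_one, κ_zero, map_one, one_mul, pow_zero,
      pow_one]
    have h1 : ∀ c ∈ (Finset.univ : Finset (Fin 0 → Fq)),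
        (if c = 0 then 1 else 1 - C ((aK Fq 0 c)⁻¹) * X : Polynomial (RatFunc Fq)) = 1 := by
      intro c _
      rw [if_pos (show c = 0 from _root_.funext fun i : Fin 0 => i.elim0)]
    rw [Finset.prod_congr rfl h1, Finset.prod_const_one, mul_one]
  | succ n ih =>
    rw [S7i.step Fq n ih]
    exact (Rp_succ Fq n).symm

end S7j

/-- for every `n ≥ 0`,
`E_n(z) = Σ_{m=0}^{n} (-1)^m · S_{<n}(q-1, q(q-1), …, (q-1)q^{m-1}) · z^{q^m}`
in `K[z]` (the `m = 0` summand being `z`); in particular `E_n` is `Fq`-linear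
and all its other coefficients vanish. -/
theorem statement7 (Fq : Type) [Field Fq] [Fintype Fq] (n : ℕ) :
    carlitzHayes Fq n =
      ∑ m ∈ Finset.range (n + 1),
        Polynomial.C ((-1 : RatFunc Fq) ^ m * Slt Fq (zagTuple Fq m) n) *
          Polynomial.X ^ Fintype.card Fq ^ m := by
  have h := S7j.carlitz_eq_Rp Fq n
  rw [S7e.Rp] at h
  simp only [S7e.κ] at h
  exact h
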